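/- Let μ, ν, κ be cardinals with μ and ν infinite and let T be a set of finite-support points of A(μ)^κ with |T| ≤ ν. Then the closure of T in A(μ)^κ has weight at most μ·ν (i.e. at most max(μ, ν)). -/

import Mathlib

open Cardinal Set Function

universe u

noncomputable section

/-- The density of a topological space: least cardinality of a dense subset. -/
def tdensity (X : Type u) [TopologicalSpace X] : Cardinal.{u} :=
  sInf {c : Cardinal.{u} | ∃ s : Set X, Dense s ∧ #s = c}

/-- The weight of a topological space: least cardinality of a base. -/
def tweight (X : Type u) [TopologicalSpace X] : Cardinal.{u} :=
  sInf {c : Cardinal.{u} | ∃ B : Set (Set X), TopologicalSpace.IsTopologicalBasis B ∧ #B = c}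

/-- The π-weight: least cardinality of a π-base. -/
def piWeight (X : Type u) [TopologicalSpace X] : Cardinal.{u} :=
  sInf {c : Cardinal.{u} | ∃ B : Set (Set X),
    (∀ U ∈ B, IsOpen U ∧ U.Nonempty) ∧
    (∀ V : Set X, IsOpen V → V.Nonempty → ∃ U ∈ B, U ⊆ V) ∧ #B = c}

/-- ĉ(X): the least cardinal κ such that X has no pairwise disjoint family of κ
nonempty open sets. -/
def hatCell (X : Type u) [TopologicalSpace X] : Cardinal.{u} :=
  sInf {c : Cardinal.{u} | ¬ ∃ 𝒰 : Set (Set X),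
    (∀ U ∈ 𝒰, IsOpen U ∧ U.Nonempty) ∧ 𝒰.PairwiseDisjoint id ∧ #𝒰 = c}

/-- `H` is a closed G_λ set: closed and the intersection of at most λ open sets. -/
def IsClosedGLambda (lam : Cardinal.{u}) {X : Type u} [TopologicalSpace X] (H : Set X) : Prop :=
  IsClosed H ∧ ∃ 𝒰 : Set (Set X), (∀ U ∈ 𝒰, IsOpen U) ∧ #𝒰 ≤ lam ∧ H = ⋂₀ 𝒰

/-- X ∈ Γ(λ): every closed G_λ set has density ≤ λ. -/
def InGamma (lam : Cardinal.{u}) (X : Type u) [TopologicalSpace X] : Prop :=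
  ∀ H : Set X, IsClosedGLambda lam H → tdensity ↥H ≤ lam

/-- `S` witnesses `X ∈ Δ(λ)`. -/
def DeltaWitness (lam : Cardinal.{u}) (X : Type u) [TopologicalSpace X] (S : Set X) : Prop :=
  Dense S ∧
  (∀ T : Set X, T ⊆ S → #T < lam → tweight ↥(closure T) < lam) ∧
  (∀ (Y : Type u) (_ : TopologicalSpace Y), T2Space Y → ∀ f : X → Y,
     Continuous f → Surjective f → tweight Y = lam → #(f '' S) = lam)

/-- X ∈ Δ(λ). -/
def InDelta (lam : Cardinal.{u}) (X : Type u) [TopologicalSpace X] : Prop :=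
  lam ≤ tweight X ∧ ∃ S : Set X, DeltaWitness lam X S

/-- A canonical discrete space of cardinality `c`. -/
instance (c : Cardinal.{u}) : TopologicalSpace c.out := ⊥

instance (c : Cardinal.{u}) : DiscreteTopology c.out := ⟨rfl⟩

/-- A(μ): one-point compactification of a discrete space of cardinality μ. -/
def ACompact (μ : Cardinal.{u}) : Type u := OnePoint μ.out

instance (μ : Cardinal.{u}) : TopologicalSpace (ACompact μ) :=
  inferInstanceAs (TopologicalSpace (OnePoint μ.out))

/-- A(μ)^κ. -/
def APow (μ κ : Cardinal.{u}) : Type u := κ.out → ACompact μ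

instance (μ κ : Cardinal.{u}) : TopologicalSpace (APow μ κ) :=
  inferInstanceAs (TopologicalSpace (κ.out → ACompact μ))

/-- The set of finite-support points of A(μ)^κ. -/
def finSupport (μ κ : Cardinal.{u}) : Set (APow μ κ) :=
  {x | {ξ | x ξ ≠ (OnePoint.infty : OnePoint μ.out)}.Finite}

/-- X is polyadic: a continuous image of some A(μ)^κ. -/
def IsPolyadic (X : Type u) [TopologicalSpace X] : Prop :=
  ∃ μ κ : Cardinal.{u}, ℵ₀ ≤ μ ∧ ∃ f : APow μ κ → X, Continuous f ∧ Surjective f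

open OnePoint TopologicalSpace in
/-- A basic-open selector for the one-point compactification of a discrete space. -/
lemma onePoint_base {α : Type u} [TopologicalSpace α] [DiscreteTopology α] :
    ∃ b : α ⊕ Finset α → Set (OnePoint α),
      (∀ j, IsOpen (b j)) ∧
      (∀ U : Set (OnePoint α), IsOpen U → ∀ p ∈ U, ∃ j, p ∈ b j ∧ b j ⊆ U) := by
  classical
  refine ⟨Sum.elim (fun a => {(a : OnePoint α)})
      (fun F => ((((↑) : α → OnePoint α) '' ↑F)ᶜ)), ?_, ?_⟩
  · rintro (a | F)
    · have : ({(a : OnePoint α)} : Set (OnePoint α)) = (↑) '' {a} := by simp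
      rw [Sum.elim_inl, this]
      exact isOpen_image_coe.2 (isOpen_discrete _)
    · exact isOpen_compl_image_coe.2 ⟨isClosed_discrete _, F.finite_toSet.isCompact⟩
  · intro U hU p hp
    cases p with
    | infty =>
        have hinfU : (∞ : OnePoint α) ∈ U := hp
        have hK : IsCompact (((↑) : α → OnePoint α) ⁻¹' U)ᶜ :=
          ((isOpen_iff_of_mem' hinfU).1 hU).1
        have hKfin : (((↑) : α → OnePoint α) ⁻¹' U)ᶜ.Finite := hK.finite_of_discrete
        refine ⟨Sum.inr hKfin.toFinset, ?_, ?_⟩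
        · simpa using (infty_not_mem_image_coe (s := (hKfin.toFinset : Set α)))
        · intro q hq
          cases q with
          | infty => exact hinfU
          | coe a =>
              by_contra hqU
              exact hq ⟨a, by simpa [Set.Finite.mem_toFinset] using hqU, rfl⟩
    | coe a => exact ⟨Sum.inl a, rfl, by simpa using hp⟩

/-- closures of small sets of finite-support points have small weight. -/
theorem statement11 (μ ν κ : Cardinal.{u}) (hμ : ℵ₀ ≤ μ) (hν : ℵ₀ ≤ ν)
    (T : Set (APow μ κ)) (hT : T ⊆ finSupport μ κ) (hTcard : #T ≤ ν) :
    tweight ↥(closure T) ≤ max μ ν := by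
  classical
  -- the union of supports
  set S : Set κ.out := {ξ | ∃ t ∈ T, t ξ ≠ (OnePoint.infty : OnePoint μ.out)} with hS
  -- cardinality of S
  have hScard : #S ≤ ν := by
    have hSeq : S = ⋃ t ∈ T, {ξ | t ξ ≠ (OnePoint.infty : OnePoint μ.out)} := by
      ext ξ; simp [hS]
    rw [hSeq]
    refine le_trans (Cardinal.mk_biUnion_le _ _) ?_
    have hsup : ⨆ t : T, #({ξ | (t : APow μ κ) ξ ≠ (OnePoint.infty : OnePoint μ.out)}) ≤ ℵ₀ :=
      ciSup_le' fun t => le_of_lt ((hT t.2).lt_aleph0)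
    calc #T * ⨆ t : T, #({ξ | (t : APow μ κ) ξ ≠ (OnePoint.infty : OnePoint μ.out)})
        ≤ ν * ν := mul_le_mul' hTcard (hsup.trans hν)
      _ = ν := Cardinal.mul_eq_self hν
  -- closure T lies in the set of points supported on S
  have hclT : ∀ x ∈ closure T, ∀ ξ, ξ ∉ S → x ξ = (OnePoint.infty : OnePoint μ.out) := by
    have hclosed : IsClosed {x : APow μ κ | ∀ ξ, ξ ∉ S → x ξ = (OnePoint.infty : OnePoint μ.out)} := by
      have : {x : APow μ κ | ∀ ξ, ξ ∉ S → x ξ = (OnePoint.infty : OnePoint μ.out)}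
          = ⋂ (ξ : κ.out) (_ : ξ ∉ S),
            (fun x : APow μ κ => x ξ) ⁻¹' {(OnePoint.infty : OnePoint μ.out)} := by
        ext x; simp [Set.mem_iInter]; rfl
      rw [this]
      have hinfty : IsClosed ({(OnePoint.infty : OnePoint μ.out)} : Set (ACompact μ)) := by
        show IsClosed ({(OnePoint.infty : OnePoint μ.out)} : Set (OnePoint μ.out))
        rw [← isOpen_compl_iff, OnePoint.compl_infty]
        exact OnePoint.isOpenEmbedding_coe.isOpen_range
      exact isClosed_iInter fun ξ => isClosed_iInter fun _ =>
        hinfty.preimage (continuous_apply ξ)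
    have hTsub : T ⊆ {x : APow μ κ | ∀ ξ, ξ ∉ S → x ξ = (OnePoint.infty : OnePoint μ.out)} := by
      intro t ht ξ hξ
      by_contra h
      exact hξ ⟨t, ht, h⟩
    exact fun x hx => closure_minimal hTsub hclosed hx
  -- base of the one-point compactification
  have hμout : Infinite μ.out := by
    rw [Cardinal.infinite_iff, Cardinal.mk_out]; exact hμ
  obtain ⟨b, hbopen, hbref⟩ := onePoint_base (α := μ.out)
  -- the index type for the basis of the subspace
  set ι := Σ F : Finset S, (F → (μ.out ⊕ Finset μ.out)) with hι
  set P : ι → Set ↥(closure T) :=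
    fun p => {x | ∀ i : p.1, (x : APow μ κ) (i : S) ∈ b (p.2 i)} with hP
  -- it is a basis
  have hbasis : TopologicalSpace.IsTopologicalBasis (Set.range P) := by
    apply TopologicalSpace.isTopologicalBasis_of_isOpen_of_nhds
    · rintro _ ⟨p, rfl⟩
      have : P p = ⋂ i : p.1,
          (fun x : ↥(closure T) => (x : APow μ κ) (i : S)) ⁻¹' b (p.2 i) := by
        ext x; simp [hP, Set.mem_iInter]; rfl
      rw [this]
      exact isOpen_iInter_of_finite fun i =>
        (hbopen (p.2 i)).preimage ((continuous_apply ((i : S) : κ.out)).comp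
          (continuous_subtype_val (p := fun x : APow μ κ => x ∈ closure T)))
    · intro x V hxV hVopen
      obtain ⟨U, hUopen, rfl⟩ := isOpen_induced_iff.1 hVopen
      obtain ⟨I, u, hu, hIu⟩ := isOpen_pi_iff.1 hUopen (x : APow μ κ) hxV
      set F : Finset S := I.subtype (· ∈ S) with hF
      have hmemF : ∀ i : F, ((i : S) : κ.out) ∈ I :=
        fun i => Finset.mem_subtype.1 i.2
      have hsel : ∀ i : F, ∃ j, (x : APow μ κ) (i : S) ∈ b j ∧ b j ⊆ u (i : S) :=
        fun i => hbref _ (hu _ (hmemF i)).1 _ (hu _ (hmemF i)).2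
      choose g hg₁ hg₂ using hsel
      refine ⟨P ⟨F, g⟩, ⟨⟨F, g⟩, rfl⟩, ?_, ?_⟩
      · exact fun i => hg₁ i
      · intro y hy
        apply hIu
        apply Set.mem_pi.2
        intro ξ hξ
        by_cases hξS : ξ ∈ S
        · have hiF : (⟨ξ, hξS⟩ : S) ∈ F := Finset.mem_subtype.2 hξ
          exact hg₂ ⟨⟨ξ, hξS⟩, hiF⟩ (hy ⟨⟨ξ, hξS⟩, hiF⟩)
        · have hyinf : (y : APow μ κ) ξ = OnePoint.infty := hclT _ y.2 ξ hξS
          have hxinf : (x : APow μ κ) ξ = OnePoint.infty := hclT _ x.2 ξ hξS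
          rw [hyinf, ← hxinf]
          exact (hu ξ hξ).2
  -- cardinality bounds
  have hβ : #(μ.out ⊕ Finset μ.out) = μ := by
    rw [Cardinal.mk_sum, Cardinal.mk_finset_of_infinite, Cardinal.mk_out]
    simp only [Cardinal.lift_id]
    exact Cardinal.add_eq_self hμ
  have hιcard : #ι ≤ max μ ν := by
    have h1 : #ι = Cardinal.sum fun F : Finset S => #(F → (μ.out ⊕ Finset μ.out)) :=
      Cardinal.mk_sigma _
    have h2 : ∀ F : Finset S, #(F → (μ.out ⊕ Finset μ.out)) ≤ μ := by
      intro F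
      rw [← Cardinal.power_def, hβ, Cardinal.mk_coe_finset]
      exact Cardinal.power_nat_le hμ
    have h3 : #ι ≤ #(Finset S) * μ := by
      rw [h1, ← Cardinal.sum_const']
      exact Cardinal.sum_le_sum _ _ h2
    have h4 : #(Finset S) ≤ ν := by
      cases finite_or_infinite S with
      | inl h =>
          haveI := Fintype.ofFinite (↥S)
          exact le_trans (le_of_lt (Cardinal.lt_aleph0_of_finite (Finset S))) hν
      | inr h =>
          rw [Cardinal.mk_finset_of_infinite]
          exact hScard
    calc #ι ≤ #(Finset S) * μ := h3
      _ ≤ max μ ν * max μ ν := mul_le_mul' (h4.trans (le_max_right μ ν)) (le_max_left μ ν)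
      _ = max μ ν := Cardinal.mul_eq_self (le_trans hμ (le_max_left μ ν))
  refine le_trans (csInf_le' ⟨Set.range P, hbasis, rfl⟩) ?_
  exact le_trans (Cardinal.mk_range_le) hιcard
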